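/- Let $S$ be a commutative local ring with maximal ideal $\mathfrak{m}$ and residue field $k = S/\mathfrak{m}$, and let $X$ be an $n \times n$ matrix with entries in $S$. If the reduction of $X$ modulo $\mathfrak{m}$, viewed as a linear map over $k$, has kernel of dimension at least $r$, then $\det(X) \in \mathfrak{m}^r$. -/

import Mathlib

open IsLocalRing Matrix

/-- A product of elements of an ideal `I` over a finset of cardinality `c` lies in `I ^ c`. -/
lemma prod_mem_pow_card {R ι : Type*} [CommRing R] [DecidableEq ι] (I : Ideal R) (T : Finset ι)
    (f : ι → R) (hf : ∀ i ∈ T, f i ∈ I) : ∏ i ∈ T, f i ∈ I ^ T.card := by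
  induction T using Finset.induction with
  | empty => simp
  | insert _ _ hx ih =>
    rename_i a s
    rw [Finset.prod_insert hx, Finset.card_insert_of_notMem hx, pow_succ, mul_comm (I ^ s.card)]
    exact Ideal.mul_mem_mul (hf a (Finset.mem_insert_self a s))
      (ih fun i hi => hf i (Finset.mem_insert_of_mem hi))

/-- If some set `T` of columns of a square matrix have all entries in an ideal `I`,
then its determinant lies in `I ^ T.card`. -/
lemma det_mem_pow_of_cols {R : Type*} [CommRing R] {m : ℕ} (I : Ideal R)
    (M : Matrix (Fin m) (Fin m) R) (T : Finset (Fin m))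
    (hT : ∀ i j, j ∈ T → M i j ∈ I) : M.det ∈ I ^ T.card := by
  classical
  rw [Matrix.det_apply]
  refine Submodule.sum_mem _ fun σ _ => Submodule.smul_of_tower_mem _ _ ?_
  rw [← Finset.prod_mul_prod_compl T (fun i => M (σ i) i)]
  exact Ideal.mul_mem_right _ _
    (prod_mem_pow_card I T _ fun i hi => hT (σ i) i hi)

/-- Let `S` be a commutative local ring with maximal ideal `𝔪` and residue field `k`, and
let `X` be an `n × n` matrix over `S`. If the reduction of `X` modulo `𝔪`, viewed as a
`k`-linear map, has kernel of dimension at least `r`, then `det X ∈ 𝔪^r`. -/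
theorem stmt7 (S : Type) [CommRing S] [IsLocalRing S] (n r : ℕ)
    (X : Matrix (Fin n) (Fin n) S)
    (h : r ≤ Module.finrank (IsLocalRing.ResidueField S)
      (LinearMap.ker (Matrix.mulVecLin (X.map (IsLocalRing.residue S))))) :
    X.det ∈ IsLocalRing.maximalIdeal S ^ r := by
  classical
  -- choose r independent vectors in the kernel
  obtain ⟨v, hv⟩ := exists_linearIndependent_of_le_finrank h
  have hw : LinearIndependent (ResidueField S)
      ((LinearMap.ker (Matrix.mulVecLin (X.map (residue S)))).subtype ∘ v) :=
    hv.map' _ (Submodule.ker_subtype _)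
  -- extend to a basis of k^n
  let b := Module.Basis.sumExtend hw
  haveI : Fintype (Fin r ⊕ Module.Basis.sumExtendIndex hw) :=
    FiniteDimensional.fintypeBasisIndex b
  have hcard : Fintype.card (Fin r ⊕ Module.Basis.sumExtendIndex hw) = n := by
    have := Module.finrank_eq_card_basis b
    simpa using this.symm
  let e : (Fin r ⊕ Module.Basis.sumExtendIndex hw) ≃ Fin n :=
    Fintype.equivFinOfCardEq hcard
  let b' : Module.Basis (Fin n) (ResidueField S) (Fin n → ResidueField S) := b.reindex e
  have hb' : ∀ j : Fin r, b' (e (Sum.inl j)) = (v j : Fin n → ResidueField S) := by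
    intro j
    rw [show b' (e (Sum.inl j)) = b (e.symm (e (Sum.inl j))) from b.reindex_apply e _,
      Equiv.symm_apply_apply]
    simp only [b, Module.Basis.sumExtend, Module.Basis.reindex_apply, Equiv.symm_symm, Equiv.trans_apply,
      Module.Basis.coe_extend]
    rfl
  -- the matrix of b' w.r.t. the standard basis, and a lift over S
  set Pbar : Matrix (Fin n) (Fin n) (ResidueField S) :=
    (Pi.basisFun (ResidueField S) (Fin n)).toMatrix b' with hPbar
  have hPbar_entry : ∀ i j, Pbar i j = b' j i := by
    intro i j; simp [hPbar, Module.Basis.toMatrix_apply]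
  set P : Matrix (Fin n) (Fin n) S :=
    Matrix.of fun i j => Function.surjInv (residue_surjective (R := S)) (Pbar i j) with hP
  have hPmap : P.map (residue S) = Pbar := by
    ext i j
    exact Function.surjInv_eq (residue_surjective (R := S)) (Pbar i j)
  -- det P is a unit
  have hPdetbar : residue S P.det = Pbar.det := by
    rw [← hPmap, RingHom.map_det]; rfl
  have hPbar_det : IsUnit Pbar.det := by
    have := (Pi.basisFun (ResidueField S) (Fin n)).isUnit_det b'
    rwa [Module.Basis.det_apply] at this
  have hPdet : IsUnit P.det := by
    by_contra hc
    have : P.det ∈ maximalIdeal S := hc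
    rw [← residue_eq_zero_iff] at this
    rw [hPdetbar] at this
    exact hPbar_det.ne_zero this
  -- the r marked columns of X * P have entries in 𝔪
  set T : Finset (Fin n) := Finset.image (fun j => e (Sum.inl j)) Finset.univ with hT
  have hTcard : T.card = r := by
    rw [hT, Finset.card_image_of_injective _
      (fun a b hab => Sum.inl_injective (e.injective hab))]
    simp
  have hcol : ∀ i j, j ∈ T → (X * P) i j ∈ maximalIdeal S := by
    intro i j hj
    rw [hT, Finset.mem_image] at hj
    obtain ⟨j', -, rfl⟩ := hj
    rw [← residue_eq_zero_iff]
    have hmap : (X * P).map (residue S) = X.map (residue S) * Pbar := by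
      rw [← hPmap, Matrix.map_mul]
    have hz : ((X * P).map (residue S)) i (e (Sum.inl j')) = 0 := by
      rw [hmap]
      have hker : (X.map (residue S)).mulVec (fun l => b' (e (Sum.inl j')) l) = 0 := by
        have h1 := (v j').2
        rw [LinearMap.mem_ker] at h1
        have h2 : (fun l => b' (e (Sum.inl j')) l) = (v j' : Fin n → ResidueField S) := by
          funext l; rw [hb' j']
        rw [h2]
        exact h1
      have h3 : (X.map (residue S) * Pbar) i (e (Sum.inl j'))
          = (X.map (residue S)).mulVec (fun l => Pbar l (e (Sum.inl j'))) i := by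
        simp [Matrix.mul_apply, Matrix.mulVec, dotProduct]
      rw [h3]
      have h4 : (fun l => Pbar l (e (Sum.inl j'))) = fun l => b' (e (Sum.inl j')) l := by
        funext l; rw [hPbar_entry]
      rw [h4, hker]
      rfl
    simpa using hz
  -- conclude
  have hdet : (X * P).det ∈ maximalIdeal S ^ r := by
    have := det_mem_pow_of_cols (maximalIdeal S) (X * P) T hcol
    rwa [hTcard] at this
  rw [Matrix.det_mul] at hdet
  obtain ⟨u, hu⟩ := hPdet
  have hX : X.det = X.det * P.det * ↑u⁻¹ := by
    rw [mul_assoc, ← hu, Units.mul_inv, mul_one]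
  rw [hX]
  exact Ideal.mul_mem_right _ _ hdet
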